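/- Let n ≥ 3. Every matrix M ∈ U(n) factors uniquely as M = ι(φ(M)) · h with h ∈ H(n), where φ : U(n) → U(n−2) deletes the first and last rows and columns and ι : U(n−2) → U(n) is the embedding N ↦ 1 ⊕ N ⊕ 1. In particular U(n) = ι(U(n−2)) · H(n). -/
import Mathlib

/-- `M` is upper unitriangular: `1`s on the diagonal, `0`s below it. -/
def InU (n : ℕ) (M : Matrix (Fin n) (Fin n) ℤ) : Prop :=
  (∀ i, M i i = 1) ∧ ∀ i j : Fin n, (j : ℕ) < (i : ℕ) → M i j = 0

/-- `M ∈ H(n)`: `M` is upper unitriangular and all off-diagonal entries vanish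
except possibly those in the first row or the last column (1-based indexing). -/
def InH (n : ℕ) (M : Matrix (Fin n) (Fin n) ℤ) : Prop :=
  InU n M ∧ ∀ i j : Fin n, i ≠ j → (i : ℕ) + 1 ≠ 1 → (j : ℕ) + 1 ≠ n → M i j = 0

/-- The "forgetful" map `φ : U(n) → U(n-2)` deleting the first and last rows and
columns: `φ(M)_{ij} = M_{i+1, j+1}` (0-based indexing). -/
def phiMap (n : ℕ) (hn : 3 ≤ n) (M : Matrix (Fin n) (Fin n) ℤ) :
    Matrix (Fin (n - 2)) (Fin (n - 2)) ℤ :=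
  Matrix.of fun i j =>
    M ⟨(i : ℕ) + 1, by have := i.isLt; omega⟩ ⟨(j : ℕ) + 1, by have := j.isLt; omega⟩

/-- The embedding `ι : U(n-2) → U(n)`, `N ↦ 1 ⊕ N ⊕ 1`: the middle
`(n-2) × (n-2)` block is `N` and the off-diagonal entries of the first row and last
column (and last row and first column) are all zero. -/
def iotaMap (n : ℕ) (hn : 3 ≤ n) (N : Matrix (Fin (n - 2)) (Fin (n - 2)) ℤ) :
    Matrix (Fin n) (Fin n) ℤ :=
  Matrix.of fun a b =>
    if h : 1 ≤ (a : ℕ) ∧ (a : ℕ) ≤ n - 2 ∧ 1 ≤ (b : ℕ) ∧ (b : ℕ) ≤ n - 2 then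
      N ⟨(a : ℕ) - 1, by omega⟩ ⟨(b : ℕ) - 1, by omega⟩
    else if a = b then 1 else 0

/-- Determinant of a unitriangular matrix is a unit. -/
lemma isUnit_det_of_InU (m : ℕ) (M : Matrix (Fin m) (Fin m) ℤ) (h : InU m M) :
    IsUnit M.det := by
  have hbt : M.BlockTriangular id := by
    intro i j hij
    exact h.2 i j hij
  rw [Matrix.det_of_upperTriangular hbt]
  simp [h.1]

/-- Summing a function supported on the middle indices. -/
lemma sum_middle (n : ℕ) (_hn : 3 ≤ n) (f : Fin n → ℤ)
    (h0 : ∀ k : Fin n, (k : ℕ) = 0 ∨ (k : ℕ) = n - 1 → f k = 0) :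
    ∑ k, f k = ∑ j : Fin (n - 2), f ⟨(j : ℕ) + 1, by have := j.isLt; omega⟩ := by
  have key : ∑ k ∈ Finset.univ.image
        (fun j : Fin (n - 2) => (⟨(j : ℕ) + 1, by have := j.isLt; omega⟩ : Fin n)), f k
      = ∑ j : Fin (n - 2), f ⟨(j : ℕ) + 1, by have := j.isLt; omega⟩ :=
    Finset.sum_image (fun a _ b _ hab =>
      Fin.ext (by have : (a : ℕ) + 1 = (b : ℕ) + 1 := congrArg Fin.val hab; omega))
  rw [← key]
  refine (Finset.sum_subset (Finset.subset_univ _) ?_).symm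
  intro k _ hk
  apply h0
  by_contra hc
  push_neg at hc
  obtain ⟨hc1, hc2⟩ := hc
  apply hk
  simp only [Finset.mem_image, Finset.mem_univ, true_and]
  refine ⟨⟨(k : ℕ) - 1, by have := k.isLt; omega⟩, ?_⟩
  exact Fin.ext (show (k : ℕ) - 1 + 1 = (k : ℕ) by omega)

theorem Un_unique_factorization (n : ℕ) (hn : 3 ≤ n) :
    ∀ M : Matrix (Fin n) (Fin n) ℤ, InU n M →
      ∃! h : Matrix (Fin n) (Fin n) ℤ,
        InH n h ∧ M = iotaMap n hn (phiMap n hn M) * h := by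
  intro M hM
  obtain ⟨hMd, hMl⟩ := hM
  set B : Matrix (Fin (n - 2)) (Fin (n - 2)) ℤ := phiMap n hn M with hBdef
  set A : Matrix (Fin n) (Fin n) ℤ := iotaMap n hn B with hAdef
  have hBU : InU (n - 2) B := by
    constructor
    · intro i
      exact hMd _
    · intro i j hij
      exact hMl _ _ (show (j : ℕ) + 1 < (i : ℕ) + 1 by omega)
  have hAU : InU n A := by
    constructor
    · intro a
      simp only [hAdef, iotaMap, Matrix.of_apply]
      split
      · exact hBU.1 _
      · simp
    · intro a b hba
      simp only [hAdef, iotaMap, Matrix.of_apply]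
      split
      · exact hBU.2 _ _ (show (b : ℕ) - 1 < (a : ℕ) - 1 by omega)
      · exact if_neg (fun hc => by have := congrArg Fin.val hc; omega)
  have hBdet : IsUnit B.det := isUnit_det_of_InU _ B hBU
  have hAdet : IsUnit A.det := isUnit_det_of_InU _ A hAU
  -- the vector of last-column entries and its preimage under B
  set c : Fin (n - 2) → ℤ := fun i => M ⟨(i : ℕ) + 1, by have := i.isLt; omega⟩
      ⟨n - 1, by omega⟩ with hcdef
  set t : Fin (n - 2) → ℤ := B⁻¹.mulVec c with htdef
  have hBt : B.mulVec t = c := by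
    rw [htdef, Matrix.mulVec_mulVec, Matrix.mul_nonsing_inv _ hBdet, Matrix.one_mulVec]
  set h : Matrix (Fin n) (Fin n) ℤ := Matrix.of fun a b =>
    if (a : ℕ) = 0 then M a b
    else if (b : ℕ) = n - 1 then
      if ha : (a : ℕ) = n - 1 then 1
      else t ⟨(a : ℕ) - 1, by have := a.isLt; omega⟩
    else if a = b then 1 else 0 with hhdef
  have hEq : M = A * h := by
    ext a b
    rw [Matrix.mul_apply]
    rcases Nat.lt_or_ge 0 (a : ℕ) with ha0 | ha0
    rcases Nat.lt_or_ge (a : ℕ) (n - 1) with han | han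
    · -- middle row: 1 ≤ a ≤ n - 2
      have hsum : ∀ k : Fin n, (k : ℕ) = 0 ∨ (k : ℕ) = n - 1 → A a k * h k b = 0 := by
        intro k hk
        have : A a k = 0 := by
          simp only [hAdef, iotaMap, Matrix.of_apply]
          rw [dif_neg (by omega)]
          rw [if_neg (fun hc => by
            have := congrArg Fin.val hc; omega)]
        rw [this, zero_mul]
      rw [sum_middle n hn _ hsum]
      have hAval : ∀ j : Fin (n - 2),
          A a ⟨(j : ℕ) + 1, by have := j.isLt; omega⟩ = B ⟨(a : ℕ) - 1, by omega⟩ j := by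
        intro j
        simp only [hAdef, iotaMap, Matrix.of_apply]
        rw [dif_pos (by have := j.isLt; omega)]
        congr 1
      rcases Nat.lt_or_ge (b : ℕ) (n - 1) with hbn | hbn
      rcases Nat.lt_or_ge 0 (b : ℕ) with hb0 | hb0
      · -- middle column: entry from B
        have hhval : ∀ j : Fin (n - 2),
            h ⟨(j : ℕ) + 1, by have := j.isLt; omega⟩ b
              = if (j : ℕ) + 1 = (b : ℕ) then 1 else 0 := by
          intro j
          simp only [hhdef, Matrix.of_apply]
          rw [if_neg (by omega), if_neg (by omega)]
          by_cases hjb : (j : ℕ) + 1 = (b : ℕ)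
          · rw [if_pos (Fin.ext hjb), if_pos hjb]
          · rw [if_neg (fun hc => hjb (congrArg Fin.val hc)), if_neg hjb]
        calc M a b = B ⟨(a : ℕ) - 1, by omega⟩ ⟨(b : ℕ) - 1, by omega⟩ := by
              simp only [hBdef, phiMap, Matrix.of_apply]
              congr 1
              · exact (Fin.ext (show (a : ℕ) - 1 + 1 = (a : ℕ) by omega)).symm
              · exact (Fin.ext (show (b : ℕ) - 1 + 1 = (b : ℕ) by omega)).symm
          _ = _ := by
              rw [Finset.sum_congr rfl (fun j _ => by rw [hAval j, hhval j])]
              rw [Finset.sum_eq_single (⟨(b : ℕ) - 1, by omega⟩ : Fin (n - 2))]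
              · rw [if_pos (show (b : ℕ) - 1 + 1 = (b : ℕ) by omega), mul_one]
              · intro j _ hj
                rw [if_neg (fun hc : (j : ℕ) + 1 = (b : ℕ) =>
                  hj (Fin.ext (show (j : ℕ) = (b : ℕ) - 1 by omega))), mul_zero]
              · simp
      · -- b = 0 : everything vanishes
        have hb0' : (b : ℕ) = 0 := by omega
        have : ∀ j : Fin (n - 2),
            A a ⟨(j : ℕ) + 1, by have := j.isLt; omega⟩
              * h ⟨(j : ℕ) + 1, by have := j.isLt; omega⟩ b = 0 := by
          intro j
          have : h ⟨(j : ℕ) + 1, by have := j.isLt; omega⟩ b = 0 := by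
            simp only [hhdef, Matrix.of_apply]
            rw [if_neg (by omega), if_neg (by omega),
              if_neg (fun hc => by
                have : (j : ℕ) + 1 = (b : ℕ) := congrArg Fin.val hc; omega)]
          rw [this, mul_zero]
        rw [Finset.sum_congr rfl (fun j _ => this j), Finset.sum_const_zero]
        exact hMl a b (by omega)
      · -- b = n - 1 : last column, use B t = c
        have hbval : (b : ℕ) = n - 1 := by have := b.isLt; omega
        have hhval : ∀ j : Fin (n - 2),
            h ⟨(j : ℕ) + 1, by have := j.isLt; omega⟩ b = t j := by
          intro j
          simp only [hhdef, Matrix.of_apply]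
          rw [if_neg (by omega), if_pos hbval, dif_neg (by have := j.isLt; omega)]
          congr 1
        rw [Finset.sum_congr rfl (fun j _ => by rw [hAval j, hhval j])]
        have := congrFun hBt ⟨(a : ℕ) - 1, by omega⟩
        rw [Matrix.mulVec, dotProduct] at this
        rw [this]
        simp only [hcdef]
        congr 1
        · exact (Fin.ext (show (a : ℕ) - 1 + 1 = (a : ℕ) by omega)).symm
        · exact Fin.ext hbval
    · -- a = n - 1 : last row
      have haval : (a : ℕ) = n - 1 := by have := a.isLt; omega
      rw [Finset.sum_eq_single a]
      · rw [hAU.1 a, one_mul]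
        simp only [hhdef, Matrix.of_apply]
        rw [if_neg (by omega)]
        by_cases hb : (b : ℕ) = n - 1
        · rw [if_pos hb, dif_pos haval]
          have : a = b := Fin.ext (by omega)
          rw [← this, hMd a]
        · rw [if_neg hb, if_neg (fun hc => hb (by rw [← congrArg Fin.val hc]; omega))]
          exact hMl a b (by omega)
      · intro k _ hk
        have : A a k = 0 := by
          simp only [hAdef, iotaMap, Matrix.of_apply]
          rw [dif_neg (by omega), if_neg (fun hc => hk hc.symm)]
        rw [this, zero_mul]
      · simp
    · -- a = 0 : first row
      have haval : (a : ℕ) = 0 := by omega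
      rw [Finset.sum_eq_single a]
      · rw [hAU.1 a, one_mul]
        simp only [hhdef, Matrix.of_apply]
        rw [if_pos haval]
      · intro k _ hk
        have : A a k = 0 := by
          simp only [hAdef, iotaMap, Matrix.of_apply]
          rw [dif_neg (by omega), if_neg (fun hc => hk hc.symm)]
        rw [this, zero_mul]
      · simp
  have hhH : InH n h := by
    refine ⟨⟨?_, ?_⟩, ?_⟩
    · intro a
      simp only [hhdef, Matrix.of_apply]
      by_cases ha : (a : ℕ) = 0
      · rw [if_pos ha]
        exact hMd a
      · rw [if_neg ha]
        by_cases ha2 : (a : ℕ) = n - 1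
        · rw [if_pos ha2, dif_pos ha2]
        · rw [if_neg ha2]; simp
    · intro i j hji
      simp only [hhdef, Matrix.of_apply]
      rw [if_neg (by omega), if_neg (by have := i.isLt; omega),
        if_neg (fun hc => by have := congrArg Fin.val hc; omega)]
    · intro i j hij hi1 hjn
      simp only [hhdef, Matrix.of_apply]
      rw [if_neg (by omega), if_neg (by omega), if_neg hij]
  refine ⟨h, ⟨hhH, hEq⟩, ?_⟩
  intro h' ⟨_, hEq'⟩
  have heq2 : A * h' = A * h := by rw [← hEq, ← hEq']
  haveI := A.invertibleOfIsUnitDet hAdet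
  exact Matrix.mul_right_injective_of_invertible A heq2
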